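/- If the center S ∈ S_{n,q} satisfies x_i ≥ r for all coordinates i, then Δ_r(S) = S_{q-1}(r,r), and hence |B_r(S)| = |S_{q-1}(r,r)|. -/

import Mathlib

def simplex (n q : ℕ) : Finset (Fin q → ℕ) := Finset.Nat.antidiagonalTuple q n

/-- Deletion distance between multiplicity vectors (equal to `n - |S ∩ T|`
on the simplex). -/
def delDist {q : ℕ} (x y : Fin q → ℕ) : ℕ := ∑ i, (x i - y i)

/-- The radius-`r` deletion ball around `x` in `S_{n,q}`. -/
def ball (n q r : ℕ) (x : Fin q → ℕ) : Finset (Fin q → ℕ) :=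
  (simplex n q).filter (fun y => delDist x y ≤ r)


/-- The ideal difference set `S_{q-1}(r,r)` of zero-sum integer vectors with
positive and negative part each at most `r`. -/
noncomputable def idealSet (q r : ℕ) : Finset (Fin q → ℤ) :=
  (Fintype.piFinset (fun _ : Fin q => Finset.Icc (-(r : ℤ)) (r : ℤ))).filter
    (fun z => ∑ i, z i = 0 ∧ ∑ i, max (z i) 0 ≤ (r : ℤ) ∧ ∑ i, max (-z i) 0 ≤ (r : ℤ))

/-- For interior centers (all multiplicities at least `r`), the difference set
of the radius-`r` ball equals the ideal set `S_{q-1}(r,r)`, and the ball attains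
the ideal cardinality. -/
theorem interior_ball_eq_idealSet (n q r : ℕ) (x : Fin q → ℕ)
    (hx : x ∈ simplex n q) (hint : ∀ i, r ≤ x i) :
    (ball n q r x).image (fun y => fun i => (y i : ℤ) - (x i : ℤ)) = idealSet q r ∧
    (ball n q r x).card = (idealSet q r).card := by
  have hxn : ∑ i, x i = n := Finset.Nat.mem_antidiagonalTuple.mp hx
  have key : (ball n q r x).image (fun y => fun i => (y i : ℤ) - (x i : ℤ)) = idealSet q r := by
    ext z
    simp only [Finset.mem_image, ball, simplex, idealSet, Finset.mem_filter,
      Finset.Nat.mem_antidiagonalTuple, Fintype.mem_piFinset, Finset.mem_Icc]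
    simp only [delDist]
    constructor
    · rintro ⟨y, ⟨⟨hyn, hyd⟩, rfl⟩⟩
      -- basic facts
      have hneg : ∑ i, max (-(((y i : ℤ)) - (x i : ℤ))) 0 = ∑ i, ((x i - y i : ℕ) : ℤ) := by
        apply Finset.sum_congr rfl
        intro i _
        omega
      have hnegle : ∑ i, max (-(((y i : ℤ)) - (x i : ℤ))) 0 ≤ (r : ℤ) := by
        rw [hneg]
        push_cast [← Nat.cast_sum]
        exact_mod_cast hyd
      have hzero : ∑ i, (((y i : ℤ)) - (x i : ℤ)) = 0 := by
        rw [Finset.sum_sub_distrib, ← Nat.cast_sum, ← Nat.cast_sum, hyn, hxn, sub_self]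
      have hpos : ∑ i, max (((y i : ℤ)) - (x i : ℤ)) 0 ≤ (r : ℤ) := by
        have : ∑ i, max (((y i : ℤ)) - (x i : ℤ)) 0
            = ∑ i, (((y i : ℤ) - (x i : ℤ)) + max (-(((y i : ℤ)) - (x i : ℤ))) 0) := by
          apply Finset.sum_congr rfl; intro i _; omega
        rw [this, Finset.sum_add_distrib, hzero, zero_add]
        exact hnegle
      refine ⟨?_, hzero, hpos, hnegle⟩
      intro i
      have h1 : max (-(((y i : ℤ)) - (x i : ℤ))) 0 ≤ (r : ℤ) := by
        refine le_trans ?_ hnegle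
        exact Finset.single_le_sum (f := fun j => max (-(((y j : ℤ)) - (x j : ℤ))) 0)
          (fun j _ => le_max_right _ _) (Finset.mem_univ i)
      have h2 : max (((y i : ℤ)) - (x i : ℤ)) 0 ≤ (r : ℤ) := by
        refine le_trans ?_ hpos
        exact Finset.single_le_sum (f := fun j => max (((y j : ℤ)) - (x j : ℤ)) 0)
          (fun j _ => le_max_right _ _) (Finset.mem_univ i)
      constructor <;> beta_reduce <;> omega
    · rintro ⟨hbd, hzero, hpos, hneg⟩
      refine ⟨fun i => ((x i : ℤ) + z i).toNat, ⟨?_, ?_⟩, ?_⟩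
      · have : ∑ i, ((((x i : ℤ) + z i).toNat : ℕ) : ℤ) = (n : ℤ) := by
          have : ∀ i ∈ Finset.univ, ((((x i : ℤ) + z i).toNat : ℕ) : ℤ) = (x i : ℤ) + z i := by
            intro i _
            have h1 : -(r : ℤ) ≤ z i := (hbd i).1
            have h2 : (r : ℤ) ≤ (x i : ℤ) := by exact_mod_cast hint i
            have : (0 : ℤ) ≤ (x i : ℤ) + z i := by omega
            exact Int.toNat_of_nonneg this
          rw [Finset.sum_congr rfl this, Finset.sum_add_distrib, hzero, add_zero,
            ← Nat.cast_sum, hxn]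
        rw [← Nat.cast_sum] at this
        exact_mod_cast this
      · have : ((∑ i, (x i - ((x i : ℤ) + z i).toNat) : ℕ) : ℤ) ≤ (r : ℤ) := by
          rw [Nat.cast_sum]
          calc ∑ i, ((x i - ((x i : ℤ) + z i).toNat : ℕ) : ℤ)
              = ∑ i, max (-(z i)) 0 := by
                apply Finset.sum_congr rfl
                intro i _
                have h1 : -(r : ℤ) ≤ z i := (hbd i).1
                have h2 : (r : ℤ) ≤ (x i : ℤ) := by exact_mod_cast hint i
                have h3 : (0 : ℤ) ≤ (x i : ℤ) + z i := by omega
                have h4 : ((((x i : ℤ) + z i).toNat : ℕ) : ℤ) = (x i : ℤ) + z i :=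
                  Int.toNat_of_nonneg h3
                omega
            _ ≤ (r : ℤ) := hneg
        exact_mod_cast this
      · funext i
        have h1 : -(r : ℤ) ≤ z i := (hbd i).1
        have h2 : (r : ℤ) ≤ (x i : ℤ) := by exact_mod_cast hint i
        have h3 : (0 : ℤ) ≤ (x i : ℤ) + z i := by omega
        have h4 : ((((x i : ℤ) + z i).toNat : ℕ) : ℤ) = (x i : ℤ) + z i :=
          Int.toNat_of_nonneg h3
        beta_reduce
        omega
  refine ⟨key, ?_⟩
  rw [← key]
  rw [Finset.card_image_of_injective]
  intro a b hab
  funext i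
  have := congrFun hab i
  simp only at this
  omega
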